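/- arXiv:math/9602216 — 2 statements merged into one kernel-verified Lean document; each statement's English description precedes it below -/
import Mathlib

section
/- (Fact 2.7.) Let κ be a measurable cardinal and λ ≥ κ a cardinal. There exist a linear order I of cardinality λ and a sequence ⟨A_i : i ≤ λ⟩ of pairwise disjoint subsets of I, each of cardinality κ, with I = ⋃_{i≤λ} A_i, such that for every X ⊆ λ + 1 with λ ∈ X, the suborder of I with underlying set ⋃_{i∈X} A_i is nicely embedded in I. -/
open Filter Cardinal

universe u w

/-- `I` is nicely embedded in `J` (along the inclusion `e : I ↪o J`): there are a nonempty
set `S` and an ultrafilter `D` on `S` together with an order embedding of `J` into the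
ultrapower `I^S/D` whose restriction to `I` is the canonical diagonal embedding. -/
def NicelyEmbedded {I : Type u} {J : Type w} [LinearOrder I] [LinearOrder J]
    (e : I ↪o J) : Prop :=
  ∃ (S : Type u) (_ : Nonempty S) (D : Ultrafilter S)
    (g : J ↪o Filter.Germ (D : Filter S) I),
    ∀ t : I, g (e t) = (↑t : Filter.Germ (D : Filter S) I)

/-- `κ` is a measurable cardinal: it is uncountable and carries a `κ`-complete
nonprincipal ultrafilter on `κ`. -/
def IsMeasurableCardinal (κ : Cardinal.{u}) : Prop :=
  ℵ₀ < κ ∧ ∃ D : Ultrafilter κ.ord.ToType,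
    (∀ x, D ≠ pure x) ∧ CardinalInterFilter (D : Filter κ.ord.ToType) κ

noncomputable section

namespace Fact27

open Ordinal Set

abbrev Carrier (l k : Ordinal.{u}) : Type u := (l + 1).ToType ×ₗ (k.ToType)ᵒᵈ

def idx {l k : Ordinal.{u}} (p : Carrier l k) : Ordinal.{u} :=
  (((Ordinal.ToType.mk (o := l + 1)).symm (ofLex p).1 : Set.Iio (l + 1)) : Ordinal.{u})

def sndK {l k : Ordinal.{u}} (p : Carrier l k) : k.ToType := OrderDual.ofDual (ofLex p).2

lemma idx_lt_succ {l k : Ordinal.{u}} (p : Carrier l k) : idx p < l + 1 :=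
  ((Ordinal.ToType.mk (o := l + 1)).symm (ofLex p).1).2

lemma idx_le {l k : Ordinal.{u}} (p : Carrier l k) : idx p ≤ l := by
  have := idx_lt_succ p
  rwa [Ordinal.add_one_eq_succ, Order.lt_succ_iff] at this

lemma idx_lt_idx {l k : Ordinal.{u}} {p q : Carrier l k} :
    idx p < idx q ↔ (ofLex p).1 < (ofLex q).1 := by
  rw [idx, idx, Subtype.coe_lt_coe, OrderIso.lt_iff_lt]

lemma idx_eq_idx {l k : Ordinal.{u}} {p q : Carrier l k} :
    idx p = idx q ↔ (ofLex p).1 = (ofLex q).1 := by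
  constructor
  · intro h
    exact (Ordinal.ToType.mk (o := l + 1)).symm.injective (Subtype.ext h)
  · intro h
    rw [idx, idx, h]

lemma carrier_lt_iff {l k : Ordinal.{u}} {p q : Carrier l k} :
    p < q ↔ idx p < idx q ∨ (idx p = idx q ∧ sndK q < sndK p) := by
  have h := Prod.Lex.lt_iff (x := toLex (ofLex p)) (y := toLex (ofLex q))
  simp only [toLex_ofLex] at h
  rw [h, ← idx_lt_idx, ← idx_eq_idx]
  exact Iff.rfl

lemma lt_of_idx_lt {l k : Ordinal.{u}} {p q : Carrier l k} (h : idx p < idx q) : p < q :=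
  carrier_lt_iff.2 (Or.inl h)

lemma lt_of_idx_eq {l k : Ordinal.{u}} {p q : Carrier l k} (h : idx p = idx q)
    (h2 : sndK q < sndK p) : p < q :=
  carrier_lt_iff.2 (Or.inr ⟨h, h2⟩)

def mkC {l k : Ordinal.{u}} (i : Set.Iio (l + 1)) (b : k.ToType) : Carrier l k :=
  toLex (Ordinal.ToType.mk (o := l + 1) i, OrderDual.toDual b)

@[simp] lemma idx_mkC {l k : Ordinal.{u}} (i : Set.Iio (l + 1)) (b : k.ToType) :
    idx (mkC i b) = (i : Ordinal) := by
  simp [idx, mkC]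

@[simp] lemma sndK_mkC {l k : Ordinal.{u}} (i : Set.Iio (l + 1)) (b : k.ToType) :
    sndK (mkC i b) = b := rfl

lemma mkC_eta {l k : Ordinal.{u}} (p : Carrier l k) (h : idx p < l + 1) :
    mkC ⟨idx p, h⟩ (sndK p) = p := by
  conv_rhs => rw [← toLex_ofLex p]
  rw [mkC]
  congr 1
  refine Prod.ext ?_ rfl
  show Ordinal.ToType.mk (o := l + 1) ⟨idx p, h⟩ = (ofLex p).1
  rw [show (⟨idx p, h⟩ : Set.Iio (l + 1)) = (Ordinal.ToType.mk (o := l + 1)).symm (ofLex p).1 from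
    Subtype.ext rfl]
  exact (Ordinal.ToType.mk (o := l + 1)).apply_symm_apply _

def pieces (l k : Ordinal.{u}) (i : Ordinal.{u}) : Set (Carrier l k) := {p | idx p = i}

def U (l k : Ordinal.{u}) (X : Set Ordinal.{u}) : Set (Carrier l k) := {p | idx p ∈ X}

lemma iUnion_pieces (l k : Ordinal.{u}) (X : Set Ordinal.{u}) :
    ⋃ i ∈ X, pieces l k i = U l k X := by
  ext p
  simp [pieces, U, eq_comm]


/-! ### The index set and ultrafilter -/

abbrev S0 (l k : Ordinal.{u}) : Type u := Finset (Carrier l k) × k.ToType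

def Bas (l k : Ordinal.{u}) (F : Finset (Carrier l k)) (γ : k.ToType) : Set (S0 l k) :=
  {s | F ⊆ s.1 ∧ γ < s.2}

def Fil (l k : Ordinal.{u}) : Filter (S0 l k) :=
  ⨅ Fγ : Finset (Carrier l k) × k.ToType, 𝓟 (Bas l k Fγ.1 Fγ.2)

lemma bas_mem_fil (l k : Ordinal.{u}) (F : Finset (Carrier l k)) (γ : k.ToType) :
    Bas l k F γ ∈ Fil l k :=
  Filter.mem_iInf_of_mem (F, γ) (Filter.mem_principal_self _)

lemma fil_neBot (l k : Ordinal.{u}) (hk : Order.IsSuccLimit k) : (Fil l k).NeBot := by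
  haveI : Nonempty k.ToType := Ordinal.nonempty_toType_iff.2 hk.pos.ne'
  haveI : NoMaxOrder k.ToType := Ordinal.toType_noMax_of_succ_lt fun _ ha => hk.succ_lt ha
  refine Filter.iInf_neBot_of_directed ?_ ?_
  · rintro ⟨F1, γ1⟩ ⟨F2, γ2⟩
    refine ⟨(F1 ∪ F2, max γ1 γ2), ?_, ?_⟩ <;>
    · refine Filter.principal_mono.2 fun s hs => ⟨?_, ?_⟩
      · exact fun x hx => hs.1 (by simp [Finset.mem_union, hx])
      · exact lt_of_le_of_lt (by simp) hs.2
  · rintro ⟨F, γ⟩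
    obtain ⟨δ, hδ⟩ := exists_gt γ
    exact Filter.principal_neBot_iff.2 ⟨(F, δ), subset_rfl, hδ⟩

/-! ### Functions into the pieces -/

def cnt {l k : Ordinal.{u}} (p : Carrier l k) (F : Finset (Carrier l k)) : ℕ :=
  (F.filter fun q => p < q).card

lemma cnt_lt {l k : Ordinal.{u}} {p q : Carrier l k} (hpq : p < q) {F : Finset (Carrier l k)}
    (hp : p ∈ F) (hq : q ∈ F) : cnt q F < cnt p F := by
  refine Finset.card_lt_card ?_
  have hsub : (F.filter fun x => q < x) ⊆ F.filter fun x => p < x :=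
    Finset.monotone_filter_right F fun x _ hx => hpq.trans hx
  refine (Finset.ssubset_iff_of_subset hsub).2 ⟨q, Finset.mem_filter.2 ⟨hq, hpq⟩, fun hm => ?_⟩
  exact absurd (Finset.mem_filter.1 hm).2 (lt_irrefl q)

lemma add_nat_lt {k : Ordinal.{u}} (hk : Order.IsSuccLimit k) {a : Ordinal.{u}} (ha : a < k) (n : ℕ) :
    a + n < k := by
  induction n with
  | zero => simpa
  | succ n ih =>
    rw [Nat.cast_succ, ← add_assoc, Ordinal.add_one_eq_succ]
    exact hk.succ_lt ih

def phi {l k : Ordinal.{u}} (hk : Order.IsSuccLimit k) (p : Carrier l k) (s : S0 l k) : k.ToType :=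
  Ordinal.ToType.mk (o := k)
    ⟨(((Ordinal.ToType.mk (o := k)).symm s.2 : Set.Iio k) : Ordinal) + (cnt p s.1 : ℕ),
      add_nat_lt hk ((Ordinal.ToType.mk (o := k)).symm s.2).2 _⟩

lemma phi_gt {l k : Ordinal.{u}} (hk : Order.IsSuccLimit k) (p : Carrier l k) {γ : k.ToType} {s : S0 l k}
    (hγ : γ < s.2) : γ < phi hk p s := by
  set e := Ordinal.ToType.mk (o := k)
  have h1 : (e.symm γ : Ordinal) < (e.symm s.2 : Ordinal) :=
    Subtype.coe_lt_coe.2 (e.symm.lt_iff_lt.2 hγ)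
  have h2 : e.symm γ < (⟨((e.symm s.2 : Set.Iio k) : Ordinal) + (cnt p s.1 : ℕ),
      add_nat_lt hk (e.symm s.2).2 _⟩ : Set.Iio k) :=
    Subtype.coe_lt_coe.1 (lt_of_lt_of_le h1 le_self_add)
  have := e.lt_iff_lt.2 h2
  rwa [e.apply_symm_apply] at this

lemma phi_lt {l k : Ordinal.{u}} (hk : Order.IsSuccLimit k) {p q : Carrier l k} (hpq : p < q)
    {s : S0 l k} (hp : p ∈ s.1) (hq : q ∈ s.1) : phi hk q s < phi hk p s := by
  apply (Ordinal.ToType.mk (o := k)).lt_iff_lt.2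
  apply Subtype.coe_lt_coe.1
  exact (add_lt_add_iff_left _).2 (by exact_mod_cast cnt_lt hpq hp hq)

/-! ### The gap-filling function -/

def nxt (X : Set Ordinal.{u}) {l k : Ordinal.{u}} (p : Carrier l k) : Ordinal.{u} :=
  sInf {i | i ∈ X ∧ idx p < i}

section nxt

variable {X : Set Ordinal.{u}} {l k : Ordinal.{u}} {p : Carrier l k}

lemma idx_lt_l (hXl : l ∈ X) (hp : idx p ∉ X) : idx p < l :=
  lt_of_le_of_ne (idx_le p) fun h => hp (by rw [h]; exact hXl)

lemma nxt_nonempty (hXl : l ∈ X) (hp : idx p ∉ X) : {i | i ∈ X ∧ idx p < i}.Nonempty :=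
  ⟨l, hXl, idx_lt_l hXl hp⟩

lemma nxt_mem (hXl : l ∈ X) (hp : idx p ∉ X) : nxt X p ∈ X ∧ idx p < nxt X p :=
  csInf_mem (nxt_nonempty hXl hp)

lemma nxt_le {j : Ordinal.{u}} (hj : j ∈ X) (hlt : idx p < j) : nxt X p ≤ j :=
  csInf_le' ⟨hj, hlt⟩

lemma nxt_lt_succ (hXl : l ∈ X) (hp : idx p ∉ X) : nxt X p < l + 1 := by
  rw [Ordinal.add_one_eq_succ, Order.lt_succ_iff]
  exact nxt_le (j := l) hXl (idx_lt_l hXl hp)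

end nxt

open Classical in
def Gfun (X : Set Ordinal.{u}) {l k : Ordinal.{u}} (hk : Order.IsSuccLimit k) (hXl : l ∈ X)
    (p : Carrier l k) (s : S0 l k) : {x // x ∈ U l k X} :=
  if hp : p ∈ U l k X then ⟨p, hp⟩
  else ⟨mkC ⟨nxt X p, nxt_lt_succ hXl hp⟩ (phi hk p s), by
    show idx _ ∈ X
    rw [idx_mkC]
    exact (nxt_mem hXl hp).1⟩


lemma nice (l k : Ordinal.{u}) (hk : Order.IsSuccLimit k) (X : Set Ordinal.{u}) (hXl : l ∈ X) :
    NicelyEmbedded (OrderEmbedding.subtype (· ∈ U l k X)) := by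
  classical
  haveI : Nonempty k.ToType := Ordinal.nonempty_toType_iff.2 hk.pos.ne'
  haveI : Nonempty (S0 l k) := inferInstance
  haveI hNe : (Fil l k).NeBot := fil_neBot l k hk
  set D : Ultrafilter (S0 l k) := Ultrafilter.of (Fil l k) with hD
  have hBas : ∀ F γ, Bas l k F γ ∈ (D : Filter (S0 l k)) := fun F γ =>
    Ultrafilter.of_le (Fil l k) (bas_mem_fil l k F γ)
  have key : ∀ p q : Carrier l k, p < q →
      ∀ᶠ s in (D : Filter (S0 l k)), Gfun X hk hXl p s < Gfun X hk hXl q s := by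
    intro p q hpq
    by_cases hp : p ∈ U l k X <;> by_cases hq : q ∈ U l k X
    · refine Eventually.of_forall fun s => ?_
      simp only [Gfun, dif_pos hp, dif_pos hq]
      exact Subtype.mk_lt_mk.2 hpq
    · have hlt : idx p < idx q := by
        rcases carrier_lt_iff.1 hpq with h | ⟨h, -⟩
        · exact h
        · exact absurd (show idx q ∈ X by rw [← h]; exact hp) hq
      refine Eventually.of_forall fun s => ?_
      simp only [Gfun, dif_pos hp, dif_neg hq]
      refine Subtype.mk_lt_mk.2 (lt_of_idx_lt ?_)
      rw [idx_mkC]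
      exact hlt.trans (nxt_mem hXl hq).2
    · have hlt : idx p < idx q := by
        rcases carrier_lt_iff.1 hpq with h | ⟨h, -⟩
        · exact h
        · exact absurd (show idx p ∈ X by rw [h]; exact hq) hp
      have h2 : nxt X p ≤ idx q := nxt_le hq hlt
      rcases lt_or_eq_of_le h2 with h3 | h3
      · refine Eventually.of_forall fun s => ?_
        simp only [Gfun, dif_neg hp, dif_pos hq]
        refine Subtype.mk_lt_mk.2 (lt_of_idx_lt ?_)
        rw [idx_mkC]; exact h3
      · refine Filter.eventually_of_mem (hBas ∅ (sndK q)) fun s hs => ?_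
        simp only [Gfun, dif_neg hp, dif_pos hq]
        refine Subtype.mk_lt_mk.2 (lt_of_idx_eq ?_ ?_)
        · rw [idx_mkC]; exact h3
        · rw [sndK_mkC]; exact phi_gt hk p hs.2
    · have hle2 : idx p ≤ idx q := by
        rcases carrier_lt_iff.1 hpq with h | ⟨h, -⟩
        · exact h.le
        · exact h.le
      have h2 : nxt X p ≤ nxt X q := by
        refine csInf_le_csInf (OrderBot.bddBelow _) (nxt_nonempty hXl hq) ?_
        rintro i ⟨hi1, hi2⟩
        exact ⟨hi1, lt_of_le_of_lt hle2 hi2⟩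
      rcases lt_or_eq_of_le h2 with h3 | h3
      · refine Eventually.of_forall fun s => ?_
        simp only [Gfun, dif_neg hp, dif_neg hq]
        refine Subtype.mk_lt_mk.2 (lt_of_idx_lt ?_)
        rw [idx_mkC, idx_mkC]; exact h3
      · refine Filter.eventually_of_mem (hBas {p, q} (Classical.arbitrary _)) fun s hs => ?_
        simp only [Gfun, dif_neg hp, dif_neg hq]
        refine Subtype.mk_lt_mk.2 (lt_of_idx_eq ?_ ?_)
        · rw [idx_mkC, idx_mkC]; exact h3
        · rw [sndK_mkC, sndK_mkC]
          exact phi_lt hk hpq (hs.1 (by simp)) (hs.1 (by simp))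
  have hmono : StrictMono fun p : Carrier l k =>
      (↑(Gfun X hk hXl p) : Germ (D : Filter (S0 l k)) {x // x ∈ U l k X}) :=
    fun p q hpq => Germ.coe_lt.2 (key p q hpq)
  refine ⟨S0 l k, inferInstance, D, OrderEmbedding.ofStrictMono _ hmono, fun t => ?_⟩
  have ht : Gfun X hk hXl (t : Carrier l k) = fun _ => t := by
    funext s
    simp only [Gfun, dif_pos t.2]
  show (↑(Gfun X hk hXl (t : Carrier l k)) : Germ (D : Filter (S0 l k)) {x // x ∈ U l k X}) =
    (↑t : Germ (D : Filter (S0 l k)) {x // x ∈ U l k X})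
  rw [ht]
  rfl


lemma mk_pieces (l k : Ordinal.{u}) {i : Ordinal.{u}} (hi : i ≤ l) :
    Cardinal.mk (pieces l k i) = k.card := by
  have hilt : i < l + 1 := by
    rw [Ordinal.add_one_eq_succ, Order.lt_succ_iff]; exact hi
  rw [← Cardinal.mk_toType k]
  refine Cardinal.mk_congr ⟨fun p => sndK p.1, fun b => ⟨mkC ⟨i, hilt⟩ b, idx_mkC _ _⟩,
    ?_, fun b => rfl⟩
  rintro ⟨p, hp⟩
  have hp' : idx p = i := hp
  refine Subtype.ext ?_
  show mkC ⟨i, hilt⟩ (sndK p) = p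
  subst hp'
  exact mkC_eta p hilt

lemma mk_carrier (l k : Ordinal.{u}) (hl : ℵ₀ ≤ l.card) (hlk : k.card ≤ l.card)
    (hk0 : k ≠ 0) : Cardinal.mk (Carrier l k) = l.card := by
  have h1 : Cardinal.mk (Carrier l k) = Cardinal.mk ((l + 1).ToType × (k.ToType)ᵒᵈ) :=
    (Cardinal.mk_congr (toLex : ((l + 1).ToType × (k.ToType)ᵒᵈ) ≃ Carrier l k)).symm
  rw [h1, Cardinal.mk_prod, Cardinal.lift_id, Cardinal.lift_id]
  have h2 : Cardinal.mk ((k.ToType)ᵒᵈ) = k.card := by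
    rw [← Cardinal.mk_congr (OrderDual.toDual : k.ToType ≃ (k.ToType)ᵒᵈ), Cardinal.mk_toType]
  have h3 : Cardinal.mk ((l + 1).ToType) = l.card := by
    rw [Cardinal.mk_toType, Ordinal.card_add, Ordinal.card_one, Cardinal.add_one_eq hl]
  rw [h2, h3]
  exact Cardinal.mul_eq_left hl hlk (fun h => hk0 (Ordinal.card_eq_zero.1 h))

end Fact27

end

/-- Fact 2.7: for a measurable `κ` and `λ ≥ κ`, there is a linear order `I` of
cardinality `λ` which is the union of a sequence `⟨A_i : i ≤ λ⟩` of pairwise disjoint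
subsets, each of cardinality `κ`, such that for every `X ⊆ λ + 1` containing `λ`, the
suborder `⋃_{i ∈ X} A_i` is nicely embedded in `I`. -/
theorem exists_linearOrder_with_nice_pieces (κ lam : Cardinal.{u})
    (hκ : IsMeasurableCardinal κ) (hle : κ ≤ lam) :
    ∃ (I : LinOrd.{u}) (A : Ordinal.{u} → Set I),
      Cardinal.mk I = lam ∧
      (∀ i : Ordinal.{u}, i ≤ lam.ord → Cardinal.mk (A i) = κ) ∧
      (∀ i j : Ordinal.{u}, i ≤ lam.ord → j ≤ lam.ord → i ≠ j → Disjoint (A i) (A j)) ∧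
      (⋃ i ∈ Set.Iic lam.ord, A i) = Set.univ ∧
      (∀ X : Set Ordinal.{u}, X ⊆ Set.Iic lam.ord → lam.ord ∈ X →
        NicelyEmbedded (OrderEmbedding.subtype (· ∈ ⋃ i ∈ X, A i))) := by
  have hωκ : ℵ₀ ≤ κ := hκ.1.le
  have hωl : ℵ₀ ≤ lam := hωκ.trans hle
  have hk : Order.IsSuccLimit κ.ord := Cardinal.isSuccLimit_ord hωκ
  refine ⟨LinOrd.of (Fact27.Carrier lam.ord κ.ord), Fact27.pieces lam.ord κ.ord,
    ?_, ?_, ?_, ?_, ?_⟩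
  · rw [show Cardinal.mk (LinOrd.of (Fact27.Carrier lam.ord κ.ord)) =
      Cardinal.mk (Fact27.Carrier lam.ord κ.ord) from rfl]
    rw [Fact27.mk_carrier lam.ord κ.ord (by rwa [Cardinal.card_ord])
      (by rw [Cardinal.card_ord, Cardinal.card_ord]; exact hle)
      (fun h => (Cardinal.aleph0_pos.trans_le hωκ).ne' (by
        rw [← Cardinal.card_ord κ, h, Ordinal.card_zero]))]
    exact Cardinal.card_ord lam
  · intro i hi
    rw [Fact27.mk_pieces lam.ord κ.ord hi, Cardinal.card_ord]
  · intro i j _ _ hij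
    rw [Set.disjoint_left]
    intro p hp hq
    exact hij ((hp : Fact27.idx p = i).symm.trans hq)
  · ext p
    simp only [Set.mem_iUnion, Set.mem_univ, iff_true, Set.mem_Iic]
    exact ⟨Fact27.idx p, Fact27.idx_le p, rfl⟩
  · intro X hX hmem
    rw [Fact27.iUnion_pieces lam.ord κ.ord X]
    exact Fact27.nice lam.ord κ.ord hk X hmem
end

section
/- (Lemma 5.1.) Let κ be an uncountable regular cardinal, let μ be a cardinal, and let ⟨μ_i : i < cf(μ)⟩ be a continuous strictly increasing sequence of ordinals with supremum μ and κ ≤ μ_0 < μ. Then there exist a linear order I of cardinality μ and a continuous increasing sequence ⟨I_i : i < cf(μ)⟩ of suborders of I (continuous: I_j = ⋃_{i<j} I_i for limit j) such that (1) κ ≤ |I_i| ≤ |μ_i| for each i; (2) I = ⋃_{i<cf(μ)} I_i; and (3) every t ∈ I_{i+1} \ I_i defines a Dedekind cut of I_i at least one side of which has cofinality κ: either the set {s ∈ I_i : s < t} has a cofinal subset of order type κ, or the set {s ∈ I_i : s > t} has a coinitial subset whose reverse order has order type κ. -/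
open Filter Cardinal

universe u

/-- The set `{s ∈ A : s < t}` has a cofinal subset of order type `κ`. -/
def HasCofinalKappaChainBelow (κ : Cardinal.{u}) {J : Type u} [LinearOrder J]
    (A : Set J) (t : J) : Prop :=
  ∃ f : κ.ord.ToType → J, StrictMono f ∧ (∀ a, f a ∈ A ∧ f a < t) ∧
    ∀ s ∈ A, s < t → ∃ a, s ≤ f a

/-- The set `{s ∈ A : t < s}` has a coinitial subset whose reverse order has order
type `κ`. -/
def HasCoinitialKappaChainAbove (κ : Cardinal.{u}) {J : Type u} [LinearOrder J]
    (A : Set J) (t : J) : Prop :=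
  ∃ f : κ.ord.ToType → J, StrictAnti f ∧ (∀ a, f a ∈ A ∧ t < f a) ∧
    ∀ s ∈ A, t < s → ∃ a, f a ≤ s

namespace Lemma51Aux

/-- position of a block index -/
noncomputable def posOf (μ : Cardinal.{u}) (d : PUnit.{u+1} ⊕ (μ.ord.ToType)ᵒᵈ) :
    Ordinal.{u} :=
  Sum.elim (fun _ => (0 : Ordinal.{u}))
    (fun a => (((Ordinal.ToType.mk (o := μ.ord))).symm (OrderDual.ofDual a)).1) d

@[simp] theorem posOf_inl (μ : Cardinal.{u}) (u : PUnit.{u+1}) :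
    posOf μ (Sum.inl u) = 0 := rfl

@[simp] theorem posOf_inr (μ : Cardinal.{u}) (a : (μ.ord.ToType)ᵒᵈ) :
    posOf μ (Sum.inr a) =
      (((Ordinal.ToType.mk (o := μ.ord))).symm (OrderDual.ofDual a)).1 := rfl

theorem posOf_lt_posOf (μ : Cardinal.{u}) {a b : (μ.ord.ToType)ᵒᵈ} (h : b < a) :
    posOf μ (Sum.inr a) < posOf μ (Sum.inr b) := by
  rw [posOf_inr, posOf_inr]
  exact Subtype.coe_lt_coe.mpr
    (((Ordinal.ToType.mk (o := μ.ord))).symm.strictMono (OrderDual.ofDual_lt_ofDual.mpr h))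

/-- The carrier of the linear order `I`. -/
abbrev ICarrier (κ μ : Cardinal.{u}) : Type u :=
  (PUnit.{u+1} ⊕ₗ (μ.ord.ToType)ᵒᵈ) ×ₗ κ.ord.ToType

/-- The filtration sets. -/
def ISet (κ μ : Cardinal.{u}) (c : Ordinal.{u}) : Set (ICarrier κ μ) :=
  {p | posOf μ (ofLex (ofLex p).1) < c}

theorem mem_ISet {κ μ : Cardinal.{u}} {c : Ordinal.{u}} {p : ICarrier κ μ} :
    p ∈ ISet κ μ c ↔ posOf μ (ofLex (ofLex p).1) < c := Iff.rfl

/-- An initial segment of `μ.ord.ToType` is equivalent to `c.ToType`. -/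
noncomputable def segEquiv (μ : Cardinal.{u}) (c : Ordinal.{u}) (h : c ≤ μ.ord) :
    {x : μ.ord.ToType // (((Ordinal.ToType.mk (o := μ.ord))).symm x).1 < c} ≃ c.ToType where
  toFun x := (Ordinal.ToType.mk (o := c)) ⟨(((Ordinal.ToType.mk (o := μ.ord))).symm x.1).1, x.2⟩
  invFun y := ⟨(Ordinal.ToType.mk (o := μ.ord)) ⟨(((Ordinal.ToType.mk (o := c))).symm y).1,
      Set.mem_Iio.mpr
        (lt_of_lt_of_le (Set.mem_Iio.mp (((Ordinal.ToType.mk (o := c))).symm y).2) h)⟩,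
    by
      rw [OrderIso.symm_apply_apply]
      exact Set.mem_Iio.mp (((Ordinal.ToType.mk (o := c))).symm y).2⟩
  left_inv x := by
    apply Subtype.ext
    simp
  right_inv y := by
    simp

theorem mk_ISet (κ μ : Cardinal.{u}) (c : Ordinal.{u}) (h0 : 0 < c) (hc : c ≤ μ.ord)
    (hκA : ℵ₀ ≤ κ) (hκc : κ ≤ c.card) :
    Cardinal.mk (ISet κ μ c) = c.card := by
  have hcinf : ℵ₀ ≤ c.card := hκA.trans hκc
  have e1 : (ISet κ μ c) ≃
      ({d : PUnit.{u+1} ⊕ (μ.ord.ToType)ᵒᵈ // posOf μ d < c} × κ.ord.ToType) :=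
    Equiv.prodSubtypeFstEquivSubtypeProd (p := fun d => posOf μ d < c)
  have e2 : {d : PUnit.{u+1} ⊕ (μ.ord.ToType)ᵒᵈ // posOf μ d < c} ≃
      (PUnit.{u+1} ⊕
        {x : μ.ord.ToType // (((Ordinal.ToType.mk (o := μ.ord))).symm x).1 < c}) :=
    Equiv.subtypeSum.trans
      (Equiv.sumCongr (Equiv.subtypeUnivEquiv fun u => (posOf_inl μ u).trans_lt h0)
        (Equiv.subtypeEquiv (OrderDual.ofDual) fun a => Iff.rfl))
  have key : Cardinal.mk (ISet κ μ c) = (1 + c.card) * κ := by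
    rw [Cardinal.mk_congr (e1.trans (Equiv.prodCongr e2 (Equiv.refl _)))]
    rw [Cardinal.mk_prod, Cardinal.mk_sum, Cardinal.mk_congr (segEquiv μ c hc)]
    simp [Cardinal.mk_toType, Cardinal.card_ord]
  rw [key, Cardinal.add_eq_right hcinf (Cardinal.one_le_aleph0.trans hcinf),
    Cardinal.mul_eq_left hcinf hκc (Cardinal.aleph0_pos.trans_le hκA).ne']

theorem posOf_lt (μ : Cardinal.{u}) (hμ : μ ≠ 0) (d : PUnit.{u+1} ⊕ (μ.ord.ToType)ᵒᵈ) :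
    posOf μ d < μ.ord := by
  have h0 : (0 : Ordinal.{u}) < μ.ord := by
    rcases eq_zero_or_pos μ.ord with h | h
    · exact absurd (by rw [← Cardinal.card_ord μ, h, Ordinal.card_zero]) hμ
    · exact h
  rcases d with u | a
  · rw [posOf_inl]; exact h0
  · rw [posOf_inr]
    exact (((Ordinal.ToType.mk (o := μ.ord))).symm (OrderDual.ofDual a)).2

theorem mk_ICarrier (κ μ : Cardinal.{u}) (hκA : ℵ₀ ≤ κ) (hκμ : κ ≤ μ) (hμ : μ ≠ 0) :
    Cardinal.mk (ICarrier κ μ) = μ := by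
  have h0 : (0 : Ordinal.{u}) < μ.ord := by
    rcases eq_zero_or_pos μ.ord with h | h
    · exact absurd (by rw [← Cardinal.card_ord μ, h, Ordinal.card_zero]) hμ
    · exact h
  have e : (ICarrier κ μ) ≃ (ISet κ μ μ.ord) :=
    (Equiv.subtypeUnivEquiv fun p => posOf_lt μ hμ _).symm
  rw [Cardinal.mk_congr e, mk_ISet κ μ μ.ord h0 le_rfl hκA (by rwa [Cardinal.card_ord]),
    Cardinal.card_ord]

end Lemma51Aux

open Lemma51Aux in
/-- Lemma 5.1. -/
theorem exists_linearOrder_filtration (κ μ : Cardinal.{u}) (hκ : ℵ₀ < κ)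
    (hreg : κ.IsRegular) (μseq : Ordinal.{u} → Ordinal.{u})
    (hsm : ∀ i j : Ordinal.{u}, i < j → j < μ.ord.cof.ord → μseq i < μseq j)
    (hcont : ∀ j : Ordinal.{u}, j < μ.ord.cof.ord → Order.IsSuccLimit j →
      μseq j = ⨆ i : Set.Iio j, μseq i)
    (hsup : (⨆ i : Set.Iio μ.ord.cof.ord, μseq i) = μ.ord)
    (h0 : κ.ord ≤ μseq 0)
    (hlt : ∀ i : Ordinal.{u}, i < μ.ord.cof.ord → μseq i < μ.ord) :
    ∃ (I : LinOrd.{u}) (Iseq : Ordinal.{u} → Set I),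
      Cardinal.mk I = μ ∧
      (∀ i j : Ordinal.{u}, i ≤ j → j < μ.ord.cof.ord → Iseq i ⊆ Iseq j) ∧
      (∀ j : Ordinal.{u}, j < μ.ord.cof.ord → Order.IsSuccLimit j →
        Iseq j = ⋃ (i : Ordinal.{u}) (_ : i < j), Iseq i) ∧
      (∀ i : Ordinal.{u}, i < μ.ord.cof.ord →
        κ ≤ Cardinal.mk (Iseq i) ∧ Cardinal.mk (Iseq i) ≤ (μseq i).card) ∧
      (⋃ (i : Ordinal.{u}) (_ : i < μ.ord.cof.ord), Iseq i) = Set.univ ∧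
      (∀ i : Ordinal.{u}, i + 1 < μ.ord.cof.ord →
        ∀ t : I, t ∈ Iseq (i + 1) → t ∉ Iseq i →
          HasCofinalKappaChainBelow κ (Iseq i) t ∨
          HasCoinitialKappaChainAbove κ (Iseq i) t) := by
  rcases eq_or_ne μ 0 with rfl | hμ0
  -- Degenerate case `μ = 0`.
  · have hcof : (0 : Cardinal.{u}).ord.cof.ord = 0 := by
      rw [Cardinal.ord_zero, Ordinal.cof_zero, Cardinal.ord_zero]
    haveI hempty : IsEmpty ((0 : Ordinal.{u}).ToType) := Ordinal.isEmpty_toType_zero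
    refine ⟨LinOrd.of ((0 : Ordinal.{u}).ToType), fun _ => ∅, ?_, ?_, ?_, ?_, ?_, ?_⟩
    · haveI : IsEmpty (LinOrd.of ((0 : Ordinal.{u}).ToType)) := hempty
      exact Cardinal.mk_eq_zero _
    · intro i j _ _; exact subset_rfl
    · intro j _ _; simp
    · intro i hi; rw [hcof] at hi; exact absurd hi ((not_lt_zero (a := i)))
    · apply Set.eq_univ_of_forall
      intro x
      exact isEmptyElim (α := (0 : Ordinal.{u}).ToType) x
    · intro i hi; rw [hcof] at hi; exact absurd hi ((not_lt_zero (a := i + 1)))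
  -- Main case `μ ≠ 0`.
  · have hκ0 : κ ≠ 0 := (Cardinal.aleph0_pos.trans hκ).ne'
    have hκord : (0 : Ordinal.{u}) < κ.ord := by
      rcases eq_zero_or_pos κ.ord with h | h
      · exact absurd (by rw [← Cardinal.card_ord κ, h, Ordinal.card_zero]) hκ0
      · exact h
    have hμord : (0 : Ordinal.{u}) < μ.ord := by
      rcases eq_zero_or_pos μ.ord with h | h
      · exact absurd (by rw [← Cardinal.card_ord μ, h, Ordinal.card_zero]) hμ0
      · exact h
    have hcof0 : (0 : Ordinal.{u}) < μ.ord.cof.ord := by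
      rcases eq_zero_or_pos μ.ord.cof.ord with h | h
      · exfalso
        have hc0 : μ.ord.cof = 0 := by
          have := Cardinal.card_ord μ.ord.cof
          rw [h, Ordinal.card_zero] at this; exact this.symm
        exact hμord.ne' (Ordinal.cof_eq_zero.mp hc0)
      · exact h
    have hle : ∀ i j : Ordinal.{u}, i ≤ j → j < μ.ord.cof.ord → μseq i ≤ μseq j := by
      intro i j hij hj
      rcases eq_or_lt_of_le hij with rfl | h
      · exact le_rfl
      · exact (hsm i j h hj).le
    have hpos : ∀ i : Ordinal.{u}, i < μ.ord.cof.ord → 0 < μseq i := by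
      intro i hi
      exact lt_of_lt_of_le hκord (h0.trans (hle 0 i (zero_le (a := i)) hi))
    have hκle : ∀ i : Ordinal.{u}, i < μ.ord.cof.ord → κ ≤ (μseq i).card := by
      intro i hi
      rw [← Cardinal.card_ord κ]
      exact Ordinal.card_le_card (h0.trans (hle 0 i (zero_le (a := i)) hi))
    have hκμ : κ < μ := by
      have h1 : κ.ord < μ.ord := lt_of_le_of_lt h0 (hlt 0 hcof0)
      exact Cardinal.ord_lt_ord.mp h1
    refine ⟨LinOrd.of (ICarrier κ μ), fun i => ISet κ μ (μseq i), ?_, ?_, ?_, ?_, ?_, ?_⟩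
    -- cardinality of I
    · exact mk_ICarrier κ μ hκ.le hκμ.le hμ0
    -- monotonicity
    · intro i j hij hj p hp
      exact lt_of_lt_of_le hp (hle i j hij hj)
    -- continuity at limits
    · intro j hj hlim
      ext p
      simp only [Set.mem_iUnion]
      constructor
      · intro hp
        have hp' : posOf μ (ofLex (ofLex p).1) < μseq j := hp
        rw [hcont j hj hlim] at hp'
        by_contra hcon
        push_neg at hcon
        haveI : Nonempty (Set.Iio j) := ⟨⟨0, hlim.pos⟩⟩
        have hub : (⨆ i : Set.Iio j, μseq i) ≤ posOf μ (ofLex (ofLex p).1) := by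
          apply ciSup_le'
          intro i
          by_contra hni
          push_neg at hni
          exact hcon i.1 i.2 (mem_ISet.mpr hni)
        exact absurd hp' hub.not_gt
      · rintro ⟨i, hij, hp⟩
        exact lt_of_lt_of_le hp (hle i j hij.le hj)
    -- cardinality bounds
    · intro i hi
      have hcard : Cardinal.mk (ISet κ μ (μseq i)) = (μseq i).card :=
        mk_ISet κ μ (μseq i) (hpos i hi) (hlt i hi).le hκ.le (hκle i hi)
      rw [hcard]
      exact ⟨hκle i hi, le_rfl⟩
    -- union is everything
    · apply Set.eq_univ_of_forall
      intro p
      simp only [Set.mem_iUnion]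
      by_contra hcon
      push_neg at hcon
      haveI : Nonempty (Set.Iio μ.ord.cof.ord) := ⟨⟨0, hcof0⟩⟩
      have hub : (⨆ i : Set.Iio μ.ord.cof.ord, μseq i) ≤ posOf μ (ofLex (ofLex p).1) := by
        apply ciSup_le'
        intro i
        by_contra hni
        push_neg at hni
        exact hcon i.1 i.2 (mem_ISet.mpr hni)
      rw [hsup] at hub
      exact absurd (posOf_lt μ hμ0 _) hub.not_gt
    -- the cut condition
    · intro i hi1 t ht1 hti
      have hii1 : i < i + 1 := by
        rw [Ordinal.add_one_eq_succ]
        exact Order.lt_succ i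
      have hi : i < μ.ord.cof.ord := lt_trans hii1 hi1
      have hipos : (0 : Ordinal.{u}) < μseq i := hpos i hi
      left
      rcases h' : ofLex (ofLex t).1 with u | a
      · exact absurd
          (show posOf μ (ofLex (ofLex t).1) < μseq i from
            lt_of_eq_of_lt ((congrArg (posOf μ) h').trans (posOf_inl μ u)) hipos)
          hti
      · have hta : ¬ posOf μ (Sum.inr a) < μseq i := fun hcon =>
          hti (show posOf μ (ofLex (ofLex t).1) < μseq i from
            lt_of_eq_of_lt (congrArg (posOf μ) h') hcon)
        have h1 : (ofLex t).1 = toLex (Sum.inr a) :=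
          (toLex_ofLex (ofLex t).1).symm.trans (congrArg toLex h')
        refine ⟨fun ξ => toLex (toLex (Sum.inl PUnit.unit), ξ), ?_, ?_, ?_⟩
        · intro ξ η hξη
          exact Prod.Lex.lt_iff.mpr (Or.inr ⟨rfl, hξη⟩)
        · intro ξ
          constructor
          · show posOf μ (Sum.inl PUnit.unit) < μseq i
            exact lt_of_eq_of_lt (posOf_inl μ PUnit.unit) hipos
          · show toLex ((toLex (Sum.inl PUnit.unit), ξ)) < toLex (ofLex t)
            refine Prod.Lex.lt_iff.mpr (Or.inl ?_)
            exact lt_of_lt_of_eq (Sum.Lex.inl_lt_inr _ _) h1.symm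
        · intro s hs hst
          rcases hs' : ofLex (ofLex s).1 with v | b
          · cases v
            refine ⟨(ofLex s).2, le_of_eq ?_⟩
            have h2 : (ofLex s).1 = toLex (Sum.inl PUnit.unit) :=
              (toLex_ofLex (ofLex s).1).symm.trans (congrArg toLex hs')
            exact (toLex_ofLex s).symm.trans
              (congrArg (fun d => toLex ((d, (ofLex s).2))) h2)
          · exfalso
            have hsb : posOf μ (Sum.inr b) < μseq i :=
              lt_of_eq_of_lt (congrArg (posOf μ) hs').symm
                (show posOf μ (ofLex (ofLex s).1) < μseq i from hs)
            have h2 : (ofLex s).1 = toLex (Sum.inr b) :=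
              (toLex_ofLex (ofLex s).1).symm.trans (congrArg toLex hs')
            have hst' := (Prod.Lex.lt_iff (x := s) (y := t)).mp hst
            rcases hst' with hfst | ⟨hfst, _⟩
            · have hlt2 : (toLex (Sum.inr b) : PUnit.{u+1} ⊕ₗ (μ.ord.ToType)ᵒᵈ)
                  < toLex (Sum.inr a) :=
                lt_of_eq_of_lt h2.symm (lt_of_lt_of_eq hfst h1)
              have hba : b < a := Sum.Lex.inr_lt_inr_iff.mp hlt2
              exact hta (lt_trans (posOf_lt_posOf μ hba) hsb)
            · have heq2 : (toLex (Sum.inr b) : PUnit.{u+1} ⊕ₗ (μ.ord.ToType)ᵒᵈ)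
                  = toLex (Sum.inr a) :=
                h2.symm.trans (hfst.trans h1)
              have hba : b = a := Sum.inr_injective (toLex_inj.mp heq2)
              exact hta (hba ▸ hsb)
end
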